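/- arXiv:1911.09566 — 2 statements merged into one kernel-verified Lean document; each statement's English description precedes it below -/
import Mathlib

section
/- Let P = {(x,y) ∈ ℝ² : |x| ≤ 1, |y| ≤ 1} and, for t ∈ (−1,1), let L_t = {(t,y) : y ∈ ℝ} divide P into P₊ = {(x,y) ∈ P : x ≥ t} and P₋ = {(x,y) ∈ P : x ≤ t}. Then c(P₊) = 1 − t, c(P₋) = 1 + t, and hence c(P₊) + c(P₋) = c(P), where for a compact convex set C ⊂ ℝ² with C ∩ ℝ^{1,0} ≠ ∅, c(C) denotes the minimal positive action A(x) over all generalized leafwise chords x on ∂C for ℝ^{1,0}. -/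
open MeasureTheory Set

noncomputable section

/-- ℝ^{2n} modeled as functions `Fin (2*n) → ℝ`. -/
abbrev E2 (n : ℕ) : Type := Fin (2 * n) → ℝ

/-- The standard inner product on `ℝ^{2n}`. -/
def ip {n : ℕ} (x y : E2 n) : ℝ := ∑ i, x i * y i

/-- The standard complex structure `J = [[0, -Iₙ],[Iₙ, 0]]`. -/
def Jmap {n : ℕ} (x : E2 n) : E2 n := fun i =>
  if h : (i : ℕ) < n then -x ⟨(i : ℕ) + n, by omega⟩
  else x ⟨(i : ℕ) - n, by have := i.isLt; omega⟩

/-- The standard symplectic form `ω₀(u,v) = ⟨Ju, v⟩`. -/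
def omega0 {n : ℕ} (u v : E2 n) : ℝ := ip (Jmap u) v

/-- The action `A(z) = ½ ∫₀ᵀ ⟨-Jż(t), z(t)⟩ dt` of a path `z : [0,T] → ℝ^{2n}`
with a.e. derivative `dz`. -/
def pathAction {n : ℕ} (T : ℝ) (z dz : ℝ → E2 n) : ℝ :=
  (1 / 2) * ∫ t in (0:ℝ)..T, ip (-(Jmap (dz t))) (z t)

/-- The coisotropic subspace `ℝ^{n,k} = {(q₁,…,qₙ,p₁,…,p_k,0,…,0)}`. -/
def Rnk (n k : ℕ) : Set (E2 n) := {x | ∀ i : Fin (2 * n), n + k ≤ (i : ℕ) → x i = 0}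

/-- The leaf direction space `V₀^{n,k} = {(0,…,0,q_{k+1},…,qₙ,0,…,0)}`. -/
def V0nk (n k : ℕ) : Set (E2 n) :=
  {x | ∀ i : Fin (2 * n), ((i : ℕ) < k ∨ n ≤ (i : ℕ)) → x i = 0}

/-- A generalized leafwise chord on `∂K` for `ℝ^{n,k}`, given together with its a.e.
derivative `dz`; the condition `z t = z 0 + ∫₀ᵗ dz` encodes that `z` is absolutely
continuous with derivative `dz` a.e., and `dz t ∈ J N_{∂K}(z t)` holds a.e. -/
def IsGLC (n k : ℕ) (K : Set (E2 n)) (T : ℝ) (z dz : ℝ → E2 n) : Prop :=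
  0 < T ∧
  IntervalIntegrable dz volume 0 T ∧
  (∀ t ∈ Set.Icc (0:ℝ) T, z t = z 0 + ∫ s in (0:ℝ)..t, dz s) ∧
  (∀ t ∈ Set.Icc (0:ℝ) T, z t ∈ frontier K) ∧
  z 0 ∈ Rnk n k ∧ z T ∈ Rnk n k ∧ z 0 - z T ∈ V0nk n k ∧
  (∀ᵐ t ∂(volume : Measure ℝ), t ∈ Set.Ioo (0:ℝ) T →
    ∃ y : E2 n, (∀ u ∈ K, ip (u - z t) y ≤ 0) ∧ dz t = Jmap y) ∧
  (∃ t ∈ Set.Icc (0:ℝ) T, z t ≠ z 0)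

/-- The set of positive actions of generalized leafwise chords on `∂K` for `ℝ^{n,k}`. -/
def glcActions (n k : ℕ) (K : Set (E2 n)) : Set ℝ :=
  {a | 0 < a ∧ ∃ T z dz, IsGLC n k K T z dz ∧ pathAction T z dz = a}

def vec2 (x y : ℝ) : E2 1 := ![x, y]
lemma vec2_zero (x y : ℝ) : vec2 x y 0 = x := rfl
lemma vec2_one (x y : ℝ) : vec2 x y 1 = y := rfl
lemma ip1 (x y : E2 1) : ip x y = x 0 * y 0 + x 1 * y 1 := by
  simp [ip, Fin.sum_univ_two]
lemma Jmap1 (x : E2 1) : Jmap x = vec2 (-(x 1)) (x 0) := by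
  funext i; fin_cases i <;> simp [Jmap, vec2]
lemma vec2_congr {x y u v : ℝ} (hx : x = u) (hy : y = v) : vec2 x y = vec2 u v := by
  rw [hx, hy]
lemma neg_vec2 (x y : ℝ) : -(vec2 x y) = vec2 (-x) (-y) := by
  funext i; fin_cases i <;> simp [vec2]
lemma smul_vec2 (c u v : ℝ) : c • vec2 u v = vec2 (c * u) (c * v) := by
  funext i; fin_cases i <;> simp [vec2]
lemma vec2_add (x y u v : ℝ) : vec2 x y + vec2 u v = vec2 (x + u) (y + v) := by
  funext i; fin_cases i <;> simp [vec2]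
lemma vec2_sub_apply0 (w : E2 1) (x y : ℝ) : (w - vec2 x y) 0 = w 0 - x := rfl
lemma vec2_sub_apply1 (w : E2 1) (x y : ℝ) : (w - vec2 x y) 1 = w 1 - y := rfl
lemma vec2_ne {x y u v : ℝ} (h : y ≠ v) : vec2 x y ≠ vec2 u v := by
  intro hc; exact h (congrFun hc 1)

lemma helper_int {E : Type*} [NormedAddCommGroup E] [NormedSpace ℝ E] [CompleteSpace E]
    {f : ℝ → E} {c : E} {u v : ℝ} (h : ∀ s ∈ Set.uIoc u v, f s = c) :
    IntervalIntegrable f volume u v ∧ (∫ s in u..v, f s) = (v - u) • c := by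
  constructor
  · rw [intervalIntegrable_iff]
    exact (integrableOn_const (C := c) measure_Ioc_lt_top.ne).congr_fun
      (fun s hs => (h s hs).symm) measurableSet_uIoc
  · rw [intervalIntegral.integral_congr_ae (Filter.Eventually.of_forall h)]
    exact intervalIntegral.integral_const c

def rect (a b : ℝ) : Set (E2 1) := {p | a ≤ p 0 ∧ p 0 ≤ b ∧ |p 1| ≤ 1}

/-- the explicit chord path -/
def zp (a b : ℝ) : ℝ → E2 1 := fun s =>
  if s ≤ 1 then vec2 b s
  else if s ≤ 1 + (b - a) then vec2 (b - (s - 1)) 1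
  else vec2 a (1 - (s - 1 - (b - a)))

def dzp (a b : ℝ) : ℝ → E2 1 := fun s =>
  if s ≤ 1 then vec2 0 1
  else if s ≤ 1 + (b - a) then vec2 (-1) 0
  else vec2 0 (-1)

section path
variable {a b : ℝ} (hab : a < b)

lemma dzp_piece1 : ∀ s ∈ Set.uIoc (0:ℝ) 1, dzp a b s = vec2 0 1 := by
  intro s hs
  rw [Set.uIoc_of_le (by norm_num : (0:ℝ) ≤ 1)] at hs
  simp [dzp, hs.2]

lemma dzp_piece2 {t : ℝ} (h1 : 1 ≤ t) (h2 : t ≤ 1 + (b - a)) :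
    ∀ s ∈ Set.uIoc (1:ℝ) t, dzp a b s = vec2 (-1) 0 := by
  intro s hs
  rw [Set.uIoc_of_le h1] at hs
  rw [dzp, if_neg (by linarith [hs.1]), if_pos (by linarith [hs.2])]

lemma dzp_piece3 (hab : a ≤ b) {t : ℝ} (h1 : 1 + (b - a) ≤ t) :
    ∀ s ∈ Set.uIoc (1 + (b - a)) t, dzp a b s = vec2 0 (-1) := by
  intro s hs
  rw [Set.uIoc_of_le h1] at hs
  rw [dzp, if_neg (by linarith [hs.1] : ¬ s ≤ 1), if_neg (by linarith [hs.1])]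

include hab

lemma zp_eq (t : ℝ) (ht : t ∈ Set.Icc (0:ℝ) (2 + (b - a))) :
    zp a b t = zp a b 0 + ∫ s in (0:ℝ)..t, dzp a b s := by
  have hL : 0 < b - a := by linarith
  have hz0 : zp a b 0 = vec2 b 0 := by simp [zp]
  obtain ⟨ht0, htT⟩ := ht
  by_cases h1 : t ≤ 1
  · have i0 := helper_int (f := dzp a b) (c := vec2 0 1) (u := 0) (v := t) (by
      intro s hs
      rw [Set.uIoc_of_le ht0] at hs
      rw [dzp, if_pos (le_trans hs.2 h1)])
    rw [i0.2, hz0, zp, if_pos h1, smul_vec2, vec2_add]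
    exact vec2_congr (by ring) (by ring)
  · push_neg at h1
    have i1 := helper_int (dzp_piece1 (a := a) (b := b))
    by_cases h2 : t ≤ 1 + (b - a)
    · have i2 := helper_int (dzp_piece2 (a := a) (b := b) h1.le h2)
      rw [← intervalIntegral.integral_add_adjacent_intervals i1.1 i2.1, i1.2, i2.2, hz0]
      rw [zp, if_neg (by linarith), if_pos h2]
      simp only [smul_vec2, vec2_add]
      exact vec2_congr (by ring) (by ring)
    · push_neg at h2
      have i2 := helper_int (dzp_piece2 (a := a) (b := b) (by linarith) (le_refl _))
      have i3 := helper_int (dzp_piece3 (a := a) (b := b) hab.le h2.le)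
      rw [← intervalIntegral.integral_add_adjacent_intervals (i1.1.trans i2.1) i3.1,
        ← intervalIntegral.integral_add_adjacent_intervals i1.1 i2.1, i1.2, i2.2, i3.2, hz0]
      rw [zp, if_neg (by linarith), if_neg (by linarith)]
      simp only [smul_vec2, vec2_add]
      exact vec2_congr (by ring) (by ring)

end path

lemma isClosed_rect (a b : ℝ) : IsClosed (rect a b) := by
  have h0 : Continuous fun p : E2 1 => p 0 := continuous_apply _
  have h1 : Continuous fun p : E2 1 => p 1 := continuous_apply _
  exact (isClosed_le continuous_const h0).inter
    ((isClosed_le h0 continuous_const).inter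
      (isClosed_le (continuous_abs.comp h1) continuous_const))

lemma perturb {a b : ℝ} {p : E2 1} (hp : p ∈ interior (rect a b)) (v : E2 1) :
    ∃ ε > (0:ℝ), (p + ε • v ∈ rect a b ∧ p + (-ε) • v ∈ rect a b) := by
  have hg : Continuous fun s : ℝ => p + s • v :=
    continuous_const.add (continuous_id.smul continuous_const)
  have h0 : (fun s : ℝ => p + s • v) ⁻¹' interior (rect a b) ∈ nhds (0:ℝ) := by
    refine (isOpen_interior.preimage hg).mem_nhds ?_
    simpa using hp
  obtain ⟨ε, hε, hball⟩ := Metric.mem_nhds_iff.mp h0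
  refine ⟨ε/2, by linarith, ?_, ?_⟩
  · refine interior_subset (hball ?_)
    simp only [Metric.mem_ball, Real.dist_eq, sub_zero]
    rw [abs_of_pos (by linarith : (0:ℝ) < ε/2)]; linarith
  · refine interior_subset (hball ?_)
    simp only [Metric.mem_ball, Real.dist_eq, sub_zero, abs_neg]
    rw [abs_of_pos (by linarith : (0:ℝ) < ε/2)]; linarith

lemma interior_rect_sub {a b : ℝ} {p : E2 1} (hp : p ∈ interior (rect a b)) :
    a < p 0 ∧ p 0 < b ∧ |p 1| < 1 := by
  obtain ⟨ε, hε, h1, h2⟩ := perturb hp (vec2 1 0)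
  obtain ⟨δ, hδ, h3, h4⟩ := perturb hp (vec2 0 1)
  have e1 : (p + ε • vec2 1 0) 0 = p 0 + ε := by
    show p 0 + ε * vec2 1 0 0 = _; simp [vec2]
  have e2 : (p + (-ε) • vec2 1 0) 0 = p 0 - ε := by
    show p 0 + (-ε) * vec2 1 0 0 = _; simp [vec2]; ring
  have e3 : (p + δ • vec2 0 1) 1 = p 1 + δ := by
    show p 1 + δ * vec2 0 1 1 = _; simp [vec2]
  have e4 : (p + (-δ) • vec2 0 1) 1 = p 1 - δ := by
    show p 1 + (-δ) * vec2 0 1 1 = _; simp [vec2]; ring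
  obtain ⟨ha1, hb1, _⟩ := h1
  obtain ⟨ha2, hb2, _⟩ := h2
  obtain ⟨_, _, hc3⟩ := h3
  obtain ⟨_, _, hc4⟩ := h4
  rw [e1] at hb1; rw [e2] at ha2; rw [e3] at hc3; rw [e4] at hc4
  rw [abs_le] at hc3 hc4
  refine ⟨by linarith, by linarith, abs_lt.mpr ⟨by linarith [hc4.1], by linarith [hc3.2]⟩⟩

lemma mem_frontier_rect {a b : ℝ} {p : E2 1} (hp : p ∈ rect a b)
    (h : p 0 = a ∨ p 0 = b ∨ |p 1| = 1) : p ∈ frontier (rect a b) := by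
  rw [(isClosed_rect a b).frontier_eq, Set.mem_diff]
  refine ⟨hp, fun hi => ?_⟩
  obtain ⟨q1, q2, q3⟩ := interior_rect_sub hi
  rcases h with h | h | h
  · linarith
  · linarith
  · linarith

section memb
variable {a b : ℝ}

lemma zp_action (hab : a < b) :
    pathAction (2 + (b - a)) (zp a b) (dzp a b) = b - a := by
  have hL : 0 < b - a := by linarith
  have p1 : ∀ s ∈ Set.uIoc (0:ℝ) 1,
      (fun s => ip (-(Jmap (dzp a b s))) (zp a b s)) s = b := by
    intro s hs
    rw [Set.uIoc_of_le (by norm_num : (0:ℝ) ≤ 1)] at hs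
    simp only [dzp, zp, if_pos hs.2, Jmap1, vec2_zero, vec2_one, neg_vec2, ip1]
    ring
  have p2 : ∀ s ∈ Set.uIoc (1:ℝ) (1 + (b - a)),
      (fun s => ip (-(Jmap (dzp a b s))) (zp a b s)) s = 1 := by
    intro s hs
    rw [Set.uIoc_of_le (by linarith : (1:ℝ) ≤ 1 + (b - a))] at hs
    simp only [dzp, zp, if_neg (by linarith [hs.1] : ¬ s ≤ 1), if_pos hs.2, Jmap1,
      vec2_zero, vec2_one, neg_vec2, ip1]
    ring
  have p3 : ∀ s ∈ Set.uIoc (1 + (b - a)) (2 + (b - a)),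
      (fun s => ip (-(Jmap (dzp a b s))) (zp a b s)) s = -a := by
    intro s hs
    rw [Set.uIoc_of_le (by linarith : 1 + (b - a) ≤ 2 + (b - a))] at hs
    simp only [dzp, zp, if_neg (by linarith [hs.1] : ¬ s ≤ 1),
      if_neg (by linarith [hs.1] : ¬ s ≤ 1 + (b - a)), Jmap1,
      vec2_zero, vec2_one, neg_vec2, ip1]
    ring
  have i1 := helper_int p1
  have i2 := helper_int p2
  have i3 := helper_int p3
  rw [pathAction, ← intervalIntegral.integral_add_adjacent_intervals (i1.1.trans i2.1) i3.1,
    ← intervalIntegral.integral_add_adjacent_intervals i1.1 i2.1, i1.2, i2.2, i3.2]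
  simp only [smul_eq_mul]
  ring

lemma rect_mem_glc (hab : a < b) : (b - a) ∈ glcActions 1 0 (rect a b) := by
  have hL : 0 < b - a := by linarith
  have hz0 : zp a b 0 = vec2 b 0 := by rw [zp, if_pos (by norm_num)]
  have hzT : zp a b (2 + (b - a)) = vec2 a 0 := by
    rw [zp, if_neg (by linarith), if_neg (by linarith)]
    exact vec2_congr rfl (by ring)
  have i1 := helper_int (dzp_piece1 (a := a) (b := b))
  have i2 := helper_int (dzp_piece2 (a := a) (b := b) (by linarith) (le_refl _))
  have i3 := helper_int (dzp_piece3 (a := a) (b := b) hab.le (by linarith : 1 + (b-a) ≤ 2 + (b-a)))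
  refine ⟨by linarith, 2 + (b - a), zp a b, dzp a b,
    ⟨by linarith, (i1.1.trans i2.1).trans i3.1, fun t ht => zp_eq hab t ht, ?_, ?_, ?_, ?_, ?_, ?_⟩,
    zp_action hab⟩
  · -- frontier
    rintro t ⟨ht0, htT⟩
    by_cases h1 : t ≤ 1
    · rw [zp, if_pos h1]
      exact mem_frontier_rect ⟨by rw [vec2_zero]; exact hab.le, by rw [vec2_zero],
        by rw [vec2_one]; exact abs_le.mpr ⟨by linarith, h1⟩⟩ (Or.inr (Or.inl rfl))
    · push_neg at h1
      by_cases h2 : t ≤ 1 + (b - a)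
      · rw [zp, if_neg (by linarith), if_pos h2]
        exact mem_frontier_rect ⟨by rw [vec2_zero]; linarith, by rw [vec2_zero]; linarith,
          by rw [vec2_one]; norm_num⟩ (Or.inr (Or.inr (by rw [vec2_one]; norm_num)))
      · push_neg at h2
        rw [zp, if_neg (by linarith), if_neg (by linarith)]
        refine mem_frontier_rect ⟨le_refl _, hab.le, ?_⟩ (Or.inl rfl)
        rw [vec2_one, abs_le]; constructor <;> linarith
  · -- z 0 ∈ Rnk
    intro i hi
    fin_cases i
    · exact absurd hi (by simp)
    · rw [hz0]; rfl
  · intro i hi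
    fin_cases i
    · exact absurd hi (by simp)
    · rw [hzT]; rfl
  · -- V0nk
    intro i hi
    fin_cases i
    · rcases hi with h | h <;> exact absurd h (by simp)
    · rw [Pi.sub_apply, hz0, hzT]
      show (0:ℝ) - 0 = 0
      ring
  · -- a.e. normal cone
    refine Filter.Eventually.of_forall ?_
    rintro t ⟨ht0, htT⟩
    by_cases h1 : t ≤ 1
    · refine ⟨vec2 1 0, fun u hu => ?_, ?_⟩
      · rw [show zp a b t = vec2 b t from by rw [zp, if_pos h1], ip1]
        simp only [vec2_sub_apply0, vec2_sub_apply1, vec2_zero, vec2_one]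
        obtain ⟨hu1, hu2, hu3⟩ := hu
        nlinarith
      · rw [dzp, if_pos h1, Jmap1, vec2_zero, vec2_one]
        exact vec2_congr (by norm_num) rfl
    · push_neg at h1
      by_cases h2 : t ≤ 1 + (b - a)
      · refine ⟨vec2 0 1, fun u hu => ?_, ?_⟩
        · rw [show zp a b t = vec2 (b - (t - 1)) 1 from by
            rw [zp, if_neg (by linarith), if_pos h2], ip1]
          simp only [vec2_sub_apply0, vec2_sub_apply1, vec2_zero, vec2_one]
          obtain ⟨hu1, hu2, hu3⟩ := hu
          rw [abs_le] at hu3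
          nlinarith [hu3.2]
        · rw [dzp, if_neg (by linarith), if_pos h2, Jmap1, vec2_zero, vec2_one]
      · push_neg at h2
        refine ⟨vec2 (-1) 0, fun u hu => ?_, ?_⟩
        · rw [show zp a b t = vec2 a (1 - (t - 1 - (b - a))) from by
            rw [zp, if_neg (by linarith), if_neg (by linarith)], ip1]
          simp only [vec2_sub_apply0, vec2_sub_apply1, vec2_zero, vec2_one]
          obtain ⟨hu1, hu2, hu3⟩ := hu
          nlinarith
        · rw [dzp, if_neg (by linarith), if_neg (by linarith), Jmap1, vec2_zero, vec2_one]
          exact vec2_congr (by norm_num) rfl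
  · -- nonconstant
    refine ⟨1, ⟨by norm_num, by linarith⟩, ?_⟩
    rw [show zp a b 1 = vec2 b 1 from by rw [zp, if_pos le_rfl], hz0]
    exact vec2_ne one_ne_zero
end memb

lemma ae_ne_pt (c : ℝ) : ∀ᵐ s : ℝ ∂volume, s ≠ c := by
  rw [ae_iff]
  simpa using measure_singleton (α := ℝ) c

lemma exists_pos_of_integral_pos {f : ℝ → ℝ} {u v : ℝ} (huv : u ≤ v) {P : ℝ → Prop}
    (hP : ∀ᵐ s ∂(volume : Measure ℝ), s ∈ Set.Ioc u v → P s)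
    (hpos : 0 < ∫ s in u..v, f s) : ∃ s ∈ Set.Ioc u v, 0 < f s ∧ P s := by
  by_contra hc
  push_neg at hc
  have h1 : ∀ᵐ s ∂(volume : Measure ℝ), s ∈ Set.Ioc u v → f s ≤ 0 :=
    hP.mono fun s h hs => by
      by_contra hf
      push_neg at hf
      exact hc s hs hf (h hs)
  have h2 : ∀ᵐ s ∂(volume : Measure ℝ), s ∈ Set.Icc u v → 0 ≤ -f s :=
    (h1.and (ae_ne_pt u)).mono fun s ⟨h, hne⟩ hs => by
      have : s ∈ Set.Ioc u v := ⟨lt_of_le_of_ne hs.1 (Ne.symm hne), hs.2⟩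
      linarith [h this]
  have h3 : 0 ≤ ∫ s in u..v, -f s :=
    intervalIntegral.integral_nonneg_of_ae_restrict huv
      ((ae_restrict_iff' measurableSet_Icc).mpr h2)
  rw [intervalIntegral.integral_neg] at h3
  linarith

section pointwise
variable {a b : ℝ}

lemma glc_pointwise (hab : a < b) {zs dzs : E2 1}
    (hzs : zs ∈ rect a b)
    (hy : ∃ y : E2 1, (∀ u ∈ rect a b, ip (u - zs) y ≤ 0) ∧ dzs = Jmap y) :
    (0 < dzs 1 → zs 0 = b) ∧ (dzs 1 < 0 → zs 0 = a) ∧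
    (0 < dzs 0 → zs 1 = -1) ∧ (dzs 0 < 0 → zs 1 = 1) ∧
    ip (-(Jmap dzs)) zs
      = ((a + b) / 2) * dzs 1 + ((b - a) / 2) * |dzs 1| + |dzs 0| := by
  obtain ⟨y, hy, hdz⟩ := hy
  have hd0 : dzs 0 = -(y 1) := by rw [hdz, Jmap1, vec2_zero]
  have hd1 : dzs 1 = y 0 := by rw [hdz, Jmap1, vec2_one]
  obtain ⟨hza, hzb, hz1⟩ := hzs
  have hz1' := abs_le.mp hz1
  have c1 : 0 < y 0 → zs 0 = b := by
    intro h
    have h2 := hy (vec2 b (zs 1)) ⟨by rw [vec2_zero]; exact hab.le, by rw [vec2_zero],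
      by rw [vec2_one]; exact hz1⟩
    rw [ip1, Pi.sub_apply, Pi.sub_apply, vec2_zero, vec2_one] at h2
    nlinarith
  have c2 : y 0 < 0 → zs 0 = a := by
    intro h
    have h2 := hy (vec2 a (zs 1)) ⟨by rw [vec2_zero], by rw [vec2_zero]; exact hab.le,
      by rw [vec2_one]; exact hz1⟩
    rw [ip1, Pi.sub_apply, Pi.sub_apply, vec2_zero, vec2_one] at h2
    nlinarith
  have c3 : y 1 < 0 → zs 1 = -1 := by
    intro h
    have h2 := hy (vec2 (zs 0) (-1)) ⟨by rw [vec2_zero]; exact hza,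
      by rw [vec2_zero]; exact hzb, by rw [vec2_one]; norm_num⟩
    rw [ip1, Pi.sub_apply, Pi.sub_apply, vec2_zero, vec2_one] at h2
    nlinarith
  have c4 : 0 < y 1 → zs 1 = 1 := by
    intro h
    have h2 := hy (vec2 (zs 0) 1) ⟨by rw [vec2_zero]; exact hza,
      by rw [vec2_zero]; exact hzb, by rw [vec2_one]; norm_num⟩
    rw [ip1, Pi.sub_apply, Pi.sub_apply, vec2_zero, vec2_one] at h2
    nlinarith
  refine ⟨by rw [hd1]; exact c1, by rw [hd1]; exact c2,
    by rw [hd0]; intro h; exact c3 (by linarith),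
    by rw [hd0]; intro h; exact c4 (by linarith), ?_⟩
  have ht1 : y 0 * zs 0 = ((a + b) / 2) * y 0 + ((b - a) / 2) * |y 0| := by
    rcases lt_trichotomy (y 0) 0 with h | h | h
    · rw [c2 h, abs_of_neg h]; ring
    · rw [h]; simp
    · rw [c1 h, abs_of_pos h]; ring
  have ht2 : y 1 * zs 1 = |y 1| := by
    rcases lt_trichotomy (y 1) 0 with h | h | h
    · rw [c3 h, abs_of_neg h]; ring
    · rw [h]; simp
    · rw [c4 h, abs_of_pos h]; ring
  rw [hd0, hd1, hdz]
  rw [show -(Jmap (Jmap y)) = vec2 (y 0) (y 1) from by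
    rw [Jmap1, Jmap1, vec2_one, vec2_zero, neg_vec2, neg_neg, neg_neg]]
  rw [ip1, vec2_zero, vec2_one, abs_neg, ht1, ht2]
end pointwise

lemma rect_lb {a b : ℝ} (hab : a < b) :
    ∀ A ∈ glcActions 1 0 (rect a b), b - a ≤ A := by
  rintro A ⟨hApos, T, z, dz, ⟨hT, hint, hzeq, hfr, hR0, hRT, hV, hae, w, hw, hzw⟩, hact⟩
  have h0T : (0:ℝ) ∈ Icc (0:ℝ) T := ⟨le_rfl, hT.le⟩
  have hTT : T ∈ Icc (0:ℝ) T := ⟨hT.le, le_rfl⟩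
  -- integrability of restrictions and coordinates
  have hsub : ∀ {u v : ℝ}, u ∈ Icc (0:ℝ) T → v ∈ Icc (0:ℝ) T →
      IntervalIntegrable dz volume u v := by
    intro u v hu hv
    refine hint.mono_set ?_
    apply Set.uIcc_subset_uIcc <;> rw [Set.uIcc_of_le hT.le]
    exacts [hu, hv]
  have hproj : ∀ (i : Fin (2*1)) {u v : ℝ}, u ∈ Icc (0:ℝ) T → v ∈ Icc (0:ℝ) T →
      IntervalIntegrable (fun s => dz s i) volume u v := by
    intro i u v hu hv
    have h := hsub hu hv
    rw [intervalIntegrable_iff] at h ⊢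
    exact (ContinuousLinearMap.proj (R := ℝ) (φ := fun _ : Fin (2*1) => ℝ) i).integrable_comp h
  have hzc : ∀ (i : Fin (2*1)), ∀ v ∈ Icc (0:ℝ) T,
      z v i = z 0 i + ∫ s in (0:ℝ)..v, dz s i := by
    intro i v hv
    have h := congrFun (hzeq v hv) i
    rw [Pi.add_apply] at h
    have h2 := (ContinuousLinearMap.proj (R := ℝ) (φ := fun _ : Fin (2*1) => ℝ) i
      ).intervalIntegral_comp_comm (hsub h0T hv)
    simp only [ContinuousLinearMap.proj_apply] at h2
    rw [h, ← h2]
  have hz01 : z 0 1 = 0 := hR0 1 (by decide)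
  have hzT1 : z T 1 = 0 := hRT 1 (by decide)
  have hzrect : ∀ v ∈ Icc (0:ℝ) T, z v ∈ rect a b := fun v hv =>
    (isClosed_rect a b).frontier_subset (hfr v hv)
  -- a.e. structure
  have hkey : ∀ᵐ s ∂(volume : Measure ℝ), s ∈ Set.Ioo 0 T →
      ((0 < dz s 1 → z s 0 = b) ∧ (dz s 1 < 0 → z s 0 = a) ∧
       (0 < dz s 0 → z s 1 = -1) ∧ (dz s 0 < 0 → z s 1 = 1) ∧
       ip (-(Jmap (dz s))) (z s)
         = ((a + b) / 2) * dz s 1 + ((b - a) / 2) * |dz s 1| + |dz s 0|) :=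
    hae.mono fun s h hs =>
      glc_pointwise hab (hzrect s (Set.Ioo_subset_Icc_self hs)) (h hs)
  have hF : ∀ v ∈ Icc (0:ℝ) T, z v 1 = ∫ s in (0:ℝ)..v, dz s 1 := by
    intro v hv
    rw [hzc 1 v hv, hz01, zero_add]
  -- the vertical coordinate is somewhere nonzero
  have hex : ∃ s ∈ Icc (0:ℝ) T, z s 1 ≠ 0 := by
    by_contra hc
    push_neg at hc
    have hd0z : ∀ᵐ s ∂(volume : Measure ℝ), s ∈ Set.Ioo 0 T → dz s 0 = 0 :=
      hkey.mono fun s h hs => by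
        obtain ⟨_, _, h3, h4, _⟩ := h hs
        rcases lt_trichotomy (dz s 0) 0 with hlt | he | hgt
        · exact absurd (hc s (Set.Ioo_subset_Icc_self hs)) (by rw [h4 hlt]; norm_num)
        · exact he
        · exact absurd (hc s (Set.Ioo_subset_Icc_self hs)) (by rw [h3 hgt]; norm_num)
    have hG : ∀ v ∈ Icc (0:ℝ) T, z v 0 = z 0 0 := by
      intro v hv
      rw [hzc 0 v hv]
      have hz : (∫ s in (0:ℝ)..v, dz s 0) = ∫ s in (0:ℝ)..v, (0:ℝ) := by
        apply intervalIntegral.integral_congr_ae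
        refine ((hd0z.and (ae_ne_pt T)).mono fun s h hs => ?_)
        rw [Set.uIoc_of_le hv.1] at hs
        exact h.1 ⟨hs.1, lt_of_le_of_ne (le_trans hs.2 hv.2) h.2⟩
      rw [hz]
      simp
    apply hzw
    funext i
    fin_cases i
    · show z w 0 = z 0 0
      exact hG w hw
    · show z w 1 = z 0 1
      rw [hc w hw, hz01]
  obtain ⟨σ, hσ, hσne⟩ := hex
  have hσ0 : 0 < σ := by
    rcases lt_or_eq_of_le hσ.1 with h | h
    · exact h
    · exact absurd (h ▸ hz01) hσne
  have hσT : σ < T := by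
    rcases lt_or_eq_of_le hσ.2 with h | h
    · exact h
    · exact absurd (h ▸ hzT1) hσne
  -- the ae property used for point selection
  set P : ℝ → Prop := fun s => s ≠ T ∧ (s ∈ Set.Ioo (0:ℝ) T →
      ((0 < dz s 1 → z s 0 = b) ∧ (dz s 1 < 0 → z s 0 = a) ∧
       (0 < dz s 0 → z s 1 = -1) ∧ (dz s 0 < 0 → z s 1 = 1) ∧
       ip (-(Jmap (dz s))) (z s)
         = ((a + b) / 2) * dz s 1 + ((b - a) / 2) * |dz s 1| + |dz s 0|)) with hPdef
  have hPae : ∀ᵐ s ∂(volume : Measure ℝ), P s := (ae_ne_pt T).and hkey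
  have hPae' : ∀ {u v : ℝ}, ∀ᵐ s ∂(volume : Measure ℝ), s ∈ Set.Ioc u v → P s :=
    fun {u v} => hPae.mono fun s h _ => h
  -- main geometric claim
  obtain ⟨t1, t2, t3, ht1, ht2, ht3, h12, habs3, hdiff⟩ :
      ∃ t1 t2 t3 : ℝ, t1 ∈ Icc (0:ℝ) T ∧ t2 ∈ Icc (0:ℝ) T ∧ t3 ∈ Icc (0:ℝ) T ∧
        t1 ≤ t2 ∧ |z t3 1| = 1 ∧ |z t2 0 - z t1 0| = b - a := by
    have hsubint : ∀ {u v : ℝ}, u ∈ Icc (0:ℝ) T → v ∈ Icc (0:ℝ) T →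
        (∫ s in u..v, dz s 1) = z v 1 - z u 1 := by
      intro u v hu hv
      rw [hF v hv, hF u hu, intervalIntegral.integral_interval_sub_left
        (hproj 1 h0T hv) (hproj 1 h0T hu)]
    have hsubint0 : ∀ {u v : ℝ}, u ∈ Icc (0:ℝ) T → v ∈ Icc (0:ℝ) T →
        (∫ s in u..v, dz s 0) = z v 0 - z u 0 := by
      intro u v hu hv
      rw [hzc 0 v hv, hzc 0 u hu, ← intervalIntegral.integral_interval_sub_left
        (hproj 0 h0T hv) (hproj 0 h0T hu)]
      ring
    rcases lt_or_gt_of_ne hσne with hneg | hpos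
    · -- z σ 1 < 0 : down via bottom
      have hi1 : 0 < ∫ s in (0:ℝ)..σ, -(dz s 1) := by
        rw [intervalIntegral.integral_neg, ← hF σ hσ]
        linarith
      obtain ⟨t1, ht1m, ht1pos, ht1P⟩ := exists_pos_of_integral_pos hσ.1 hPae' hi1
      have ht1oo : t1 ∈ Set.Ioo (0:ℝ) T := ⟨ht1m.1, lt_of_le_of_lt ht1m.2 hσT⟩
      have hzt1 : z t1 0 = a := (ht1P.2 ht1oo).2.1 (by linarith)
      have hi2 : 0 < ∫ s in σ..T, dz s 1 := by
        rw [hsubint hσ hTT, hzT1]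
        linarith
      obtain ⟨t2, ht2m, ht2pos, ht2P⟩ := exists_pos_of_integral_pos hσ.2 hPae' hi2
      have ht2oo : t2 ∈ Set.Ioo (0:ℝ) T :=
        ⟨lt_trans hσ0 ht2m.1, lt_of_le_of_ne ht2m.2 ht2P.1⟩
      have hzt2 : z t2 0 = b := (ht2P.2 ht2oo).1 ht2pos
      have ht1t2 : t1 ≤ t2 := le_trans ht1m.2 ht2m.1.le
      have ht1c : t1 ∈ Icc (0:ℝ) T := ⟨ht1m.1.le, le_trans ht1m.2 hσ.2⟩
      have ht2c : t2 ∈ Icc (0:ℝ) T := ⟨ht2oo.1.le, ht2m.2⟩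
      have hi3 : 0 < ∫ s in t1..t2, dz s 0 := by
        rw [hsubint0 ht1c ht2c, hzt1, hzt2]
        linarith
      obtain ⟨t3, ht3m, ht3pos, ht3P⟩ := exists_pos_of_integral_pos ht1t2 hPae' hi3
      have ht3oo : t3 ∈ Set.Ioo (0:ℝ) T :=
        ⟨lt_trans ht1oo.1 ht3m.1, lt_of_le_of_ne (le_trans ht3m.2 ht2c.2) ht3P.1⟩
      have hzt3 : z t3 1 = -1 := (ht3P.2 ht3oo).2.2.1 ht3pos
      exact ⟨t1, t2, t3, ht1c, ht2c, Set.Ioo_subset_Icc_self ht3oo, ht1t2,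
        by rw [hzt3]; norm_num, by rw [hzt1, hzt2, abs_of_pos (by linarith)]⟩
    · -- 0 < z σ 1 : up via top
      have hi1 : 0 < ∫ s in (0:ℝ)..σ, dz s 1 := by
        rw [← hF σ hσ]; exact hpos
      obtain ⟨t1, ht1m, ht1pos, ht1P⟩ := exists_pos_of_integral_pos hσ.1 hPae' hi1
      have ht1oo : t1 ∈ Set.Ioo (0:ℝ) T := ⟨ht1m.1, lt_of_le_of_lt ht1m.2 hσT⟩
      have hzt1 : z t1 0 = b := (ht1P.2 ht1oo).1 ht1pos
      have hi2 : 0 < ∫ s in σ..T, -(dz s 1) := by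
        rw [intervalIntegral.integral_neg, hsubint hσ hTT, hzT1]
        linarith
      obtain ⟨t2, ht2m, ht2pos, ht2P⟩ := exists_pos_of_integral_pos hσ.2 hPae' hi2
      have ht2oo : t2 ∈ Set.Ioo (0:ℝ) T :=
        ⟨lt_trans hσ0 ht2m.1, lt_of_le_of_ne ht2m.2 ht2P.1⟩
      have hzt2 : z t2 0 = a := (ht2P.2 ht2oo).2.1 (by linarith)
      have ht1t2 : t1 ≤ t2 := le_trans ht1m.2 ht2m.1.le
      have ht1c : t1 ∈ Icc (0:ℝ) T := ⟨ht1m.1.le, le_trans ht1m.2 hσ.2⟩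
      have ht2c : t2 ∈ Icc (0:ℝ) T := ⟨ht2oo.1.le, ht2m.2⟩
      have hi3 : 0 < ∫ s in t1..t2, -(dz s 0) := by
        rw [intervalIntegral.integral_neg, hsubint0 ht1c ht2c, hzt1, hzt2]
        linarith
      obtain ⟨t3, ht3m, ht3pos, ht3P⟩ := exists_pos_of_integral_pos ht1t2 hPae' hi3
      have ht3oo : t3 ∈ Set.Ioo (0:ℝ) T :=
        ⟨lt_trans ht1oo.1 ht3m.1, lt_of_le_of_ne (le_trans ht3m.2 ht2c.2) ht3P.1⟩
      have hzt3 : z t3 1 = 1 := (ht3P.2 ht3oo).2.2.2.1 (by linarith)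
      exact ⟨t1, t2, t3, ht1c, ht2c, Set.Ioo_subset_Icc_self ht3oo, ht1t2,
        by rw [hzt3]; norm_num, by rw [hzt1, hzt2, abs_of_neg (by linarith), neg_sub]⟩
  -- lower bounds on total variations
  have habs0 : ∀ {u v : ℝ}, u ∈ Icc (0:ℝ) T → v ∈ Icc (0:ℝ) T →
      IntervalIntegrable (fun s => |dz s 0|) volume u v := fun hu hv => (hproj 0 hu hv).abs
  have habs1 : ∀ {u v : ℝ}, u ∈ Icc (0:ℝ) T → v ∈ Icc (0:ℝ) T →
      IntervalIntegrable (fun s => |dz s 1|) volume u v := fun hu hv => (hproj 1 hu hv).abs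
  have hsubint : ∀ (i : Fin (2*1)) {u v : ℝ}, u ∈ Icc (0:ℝ) T → v ∈ Icc (0:ℝ) T →
      (∫ s in u..v, dz s i) = z v i - z u i := by
    intro i u v hu hv
    rw [hzc i v hv, hzc i u hu, ← intervalIntegral.integral_interval_sub_left
      (hproj i h0T hv) (hproj i h0T hu)]
    ring
  have E1 : b - a ≤ ∫ s in (0:ℝ)..T, |dz s 0| := by
    have e1 : (∫ s in (0:ℝ)..t1, |dz s 0|) + ∫ s in t1..t2, |dz s 0|
        = ∫ s in (0:ℝ)..t2, |dz s 0| :=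
      intervalIntegral.integral_add_adjacent_intervals (habs0 h0T ht1) (habs0 ht1 ht2)
    have e2 : (∫ s in (0:ℝ)..t2, |dz s 0|) + ∫ s in t2..T, |dz s 0|
        = ∫ s in (0:ℝ)..T, |dz s 0| :=
      intervalIntegral.integral_add_adjacent_intervals (habs0 h0T ht2) (habs0 ht2 hTT)
    have p1 : 0 ≤ ∫ s in (0:ℝ)..t1, |dz s 0| :=
      intervalIntegral.integral_nonneg ht1.1 fun u _ => abs_nonneg _
    have p2 : 0 ≤ ∫ s in t2..T, |dz s 0| :=
      intervalIntegral.integral_nonneg ht2.2 fun u _ => abs_nonneg _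
    have p3 : b - a ≤ ∫ s in t1..t2, |dz s 0| := by
      calc b - a = |z t2 0 - z t1 0| := hdiff.symm
        _ = |∫ s in t1..t2, dz s 0| := by rw [hsubint 0 ht1 ht2]
        _ ≤ ∫ s in t1..t2, |dz s 0| :=
            intervalIntegral.abs_integral_le_integral_abs h12
    linarith
  have E2 : 2 ≤ ∫ s in (0:ℝ)..T, |dz s 1| := by
    have e1 : (∫ s in (0:ℝ)..t3, |dz s 1|) + ∫ s in t3..T, |dz s 1|
        = ∫ s in (0:ℝ)..T, |dz s 1| :=
      intervalIntegral.integral_add_adjacent_intervals (habs1 h0T ht3) (habs1 ht3 hTT)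
    have p1 : 1 ≤ ∫ s in (0:ℝ)..t3, |dz s 1| := by
      calc (1:ℝ) = |z t3 1 - z 0 1| := by rw [hz01, sub_zero, habs3]
        _ = |∫ s in (0:ℝ)..t3, dz s 1| := by rw [hsubint 1 h0T ht3]
        _ ≤ ∫ s in (0:ℝ)..t3, |dz s 1| :=
            intervalIntegral.abs_integral_le_integral_abs ht3.1
    have p2 : 1 ≤ ∫ s in t3..T, |dz s 1| := by
      calc (1:ℝ) = |z T 1 - z t3 1| := by rw [hzT1, zero_sub, abs_neg, habs3]
        _ = |∫ s in t3..T, dz s 1| := by rw [hsubint 1 ht3 hTT]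
        _ ≤ ∫ s in t3..T, |dz s 1| :=
            intervalIntegral.abs_integral_le_integral_abs ht3.2
    linarith
  -- the action identity
  have hconst1 : IntervalIntegrable (fun s => ((b - a) / 2) * |dz s 1|) volume 0 T :=
    (habs1 h0T hTT).const_mul _
  have hconstm : IntervalIntegrable (fun s => ((a + b) / 2) * dz s 1) volume 0 T :=
    (hproj 1 h0T hTT).const_mul _
  have hIdent : (∫ s in (0:ℝ)..T, ip (-(Jmap (dz s))) (z s))
      = ((a + b) / 2) * (∫ s in (0:ℝ)..T, dz s 1)
        + ((b - a) / 2) * (∫ s in (0:ℝ)..T, |dz s 1|)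
        + ∫ s in (0:ℝ)..T, |dz s 0| := by
    have hcg : (∫ s in (0:ℝ)..T, ip (-(Jmap (dz s))) (z s))
        = ∫ s in (0:ℝ)..T,
            (((a + b) / 2) * dz s 1 + ((b - a) / 2) * |dz s 1| + |dz s 0|) := by
      apply intervalIntegral.integral_congr_ae
      refine (hkey.and (ae_ne_pt T)).mono fun s h hs => ?_
      rw [Set.uIoc_of_le hT.le] at hs
      exact (h.1 ⟨hs.1, lt_of_le_of_ne hs.2 h.2⟩).2.2.2.2
    rw [hcg, intervalIntegral.integral_add (hconstm.add hconst1) (habs0 h0T hTT),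
      intervalIntegral.integral_add hconstm hconst1,
      intervalIntegral.integral_const_mul, intervalIntegral.integral_const_mul]
  have hint1 : (∫ s in (0:ℝ)..T, dz s 1) = 0 := by
    have := hF T hTT
    rw [hzT1] at this
    exact this.symm
  rw [← hact, pathAction, hIdent, hint1]
  have hmul : ((b - a) / 2) * 2 ≤ ((b - a) / 2) * (∫ s in (0:ℝ)..T, |dz s 1|) :=
    mul_le_mul_of_nonneg_left E2 (by linarith)
  linarith

/-- Remark 1.4, second part: for the square `P = [-1,1]²` cut by the
vertical line `L_t = {x = t}`, `t ∈ (-1,1)`, into `P₊ = P ∩ {x ≥ t}` and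
`P₋ = P ∩ {x ≤ t}`, one has `c(P₊) = 1 - t`, `c(P₋) = 1 + t` and `c(P) = 2`, so that
`c(P₊) + c(P₋) = c(P)`, where `c` is the minimal positive action of generalized
leafwise chords for `ℝ^{1,0}`. -/
theorem square_vertical_cut_additivity (t : ℝ) (ht1 : -1 < t) (ht2 : t < 1) :
    IsLeast (glcActions 1 0 ({p : E2 1 | |p 0| ≤ 1 ∧ |p 1| ≤ 1} ∩ {p : E2 1 | t ≤ p 0}))
      (1 - t) ∧
    IsLeast (glcActions 1 0 ({p : E2 1 | |p 0| ≤ 1 ∧ |p 1| ≤ 1} ∩ {p : E2 1 | p 0 ≤ t}))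
      (1 + t) ∧
    IsLeast (glcActions 1 0 {p : E2 1 | |p 0| ≤ 1 ∧ |p 1| ≤ 1}) 2 ∧
    (1 - t) + (1 + t) = (2 : ℝ) := by
  have hset1 : ({p : E2 1 | |p 0| ≤ 1 ∧ |p 1| ≤ 1} ∩ {p : E2 1 | t ≤ p 0}) = rect t 1 := by
    ext p
    simp only [rect, Set.mem_inter_iff, Set.mem_setOf_eq]
    constructor
    · rintro ⟨⟨h1, h2⟩, h3⟩
      exact ⟨h3, (abs_le.mp h1).2, h2⟩
    · rintro ⟨h1, h2, h3⟩
      exact ⟨⟨abs_le.mpr ⟨by linarith, h2⟩, h3⟩, h1⟩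
  have hset2 : ({p : E2 1 | |p 0| ≤ 1 ∧ |p 1| ≤ 1} ∩ {p : E2 1 | p 0 ≤ t}) = rect (-1) t := by
    ext p
    simp only [rect, Set.mem_inter_iff, Set.mem_setOf_eq]
    constructor
    · rintro ⟨⟨h1, h2⟩, h3⟩
      exact ⟨(abs_le.mp h1).1, h3, h2⟩
    · rintro ⟨h1, h2, h3⟩
      exact ⟨⟨abs_le.mpr ⟨h1, by linarith⟩, h3⟩, h2⟩
  have hset3 : ({p : E2 1 | |p 0| ≤ 1 ∧ |p 1| ≤ 1}) = rect (-1) 1 := by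
    ext p
    simp only [rect, Set.mem_setOf_eq]
    constructor
    · rintro ⟨h1, h2⟩
      exact ⟨(abs_le.mp h1).1, (abs_le.mp h1).2, h2⟩
    · rintro ⟨h1, h2, h3⟩
      exact ⟨abs_le.mpr ⟨h1, h2⟩, h3⟩
  refine ⟨?_, ?_, ?_, by ring⟩
  · rw [hset1]
    exact ⟨rect_mem_glc ht2, fun A hA => rect_lb ht2 A hA⟩
  · rw [hset2, show (1:ℝ) + t = t - (-1) from by ring]
    exact ⟨rect_mem_glc ht1, fun A hA => rect_lb ht1 A hA⟩
  · rw [hset3, show (2:ℝ) = 1 - (-1) from by ring]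
    have h : (-1:ℝ) < 1 := by norm_num
    exact ⟨rect_mem_glc h, fun A hA => rect_lb h A hA⟩
end
end

section
/- Given a finite sequence of pairwise distinct vectors v_1,…,v_k ∈ ℝ^{2n}, if z ∈ H¹([0,1],ℝ^{2n}) is a piecewise affine path with ż(t) = Σ_{i=1}^m χ_{I_i}(t) w_i where w_i ∈ {v_1,…,v_k} for each i and (I_i = (τ_{i−1}, τ_i))_{i=1}^m is a partition of [0,1], then there exists a piecewise affine path z' such that ż'(t) ∈ {v_1,…,v_k} for almost every t, z'(0) = z(0), z'(1) = z(1), the set {t : ż'(t) = v_j} is connected for every j = 1,…,k, and ∫₀¹ ⟨−Jż'(t), z'(t)⟩ dt ≥ ∫₀¹ ⟨−Jż(t), z(t)⟩ dt. -/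
open MeasureTheory Set

noncomputable section

/-- The step function with value `w i` on the `i`-th open interval of the partition `τ`. -/
def stepFn {n : ℕ} (m : ℕ) (τ : Fin (m + 1) → ℝ) (w : Fin m → E2 n) : ℝ → E2 n :=
  fun t => ∑ i : Fin m, Set.indicator (Set.Ioo (τ i.castSucc) (τ i.succ)) (fun _ => w i) t

/-- A partition `0 = τ₀ ≤ τ₁ ≤ … ≤ τ_m = 1` of `[0,1]` (intervals may be empty). -/
def IsPartition (m : ℕ) (τ : Fin (m + 1) → ℝ) : Prop :=
  Monotone τ ∧ τ 0 = 0 ∧ τ (Fin.last m) = 1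

variable {n : ℕ}

lemma ip_add_right (x y z : E2 n) : ip x (y + z) = ip x y + ip x z := by
  simp [ip, mul_add, Finset.sum_add_distrib]

lemma ip_smul_right (c : ℝ) (x y : E2 n) : ip x (c • y) = c * ip x y := by
  simp only [ip, Finset.mul_sum]
  exact Finset.sum_congr rfl fun i _ => by simp; ring

lemma ip_add_left (x y z : E2 n) : ip (x + y) z = ip x z + ip y z := by
  simp [ip, add_mul, Finset.sum_add_distrib]

lemma ip_smul_left (c : ℝ) (x y : E2 n) : ip (c • x) y = c * ip x y := by
  simp only [ip, Finset.mul_sum]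
  exact Finset.sum_congr rfl fun i _ => by simp; ring

lemma ip_neg_left (x y : E2 n) : ip (-x) y = -ip x y := by
  simp [ip, Finset.sum_neg_distrib]

lemma ip_sum_right {ι : Type*} (s : Finset ι) (x : E2 n) (f : ι → E2 n) :
    ip x (∑ i ∈ s, f i) = ∑ i ∈ s, ip x (f i) := by
  classical
  induction s using Finset.induction with
  | empty => simp [ip]
  | insert _ _ h ih => rw [Finset.sum_insert h, ip_add_right, ih, Finset.sum_insert h]

lemma ip_sum_left {ι : Type*} (s : Finset ι) (f : ι → E2 n) (y : E2 n) :
    ip (∑ i ∈ s, f i) y = ∑ i ∈ s, ip (f i) y := by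
  classical
  induction s using Finset.induction with
  | empty => simp [ip]
  | insert _ _ h ih => rw [Finset.sum_insert h, ip_add_left, ih, Finset.sum_insert h]

lemma Jmap_add (x y : E2 n) : Jmap (x + y) = Jmap x + Jmap y := by
  funext i; by_cases h : (i : ℕ) < n <;> simp [Jmap, h] <;> ring

lemma Jmap_smul (c : ℝ) (x : E2 n) : Jmap (c • x) = c • Jmap x := by
  funext i; by_cases h : (i : ℕ) < n <;> simp [Jmap, h] <;> ring

lemma Jmap_sum {ι : Type*} (s : Finset ι) (f : ι → E2 n) :
    Jmap (∑ i ∈ s, f i) = ∑ i ∈ s, Jmap (f i) := by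
  classical
  induction s using Finset.induction with
  | empty =>
      funext i
      by_cases h : (i : ℕ) < n
      · simp only [Finset.sum_empty, Jmap, h, dif_pos]; simp
      · simp only [Finset.sum_empty, Jmap, h, dif_neg]; simp
  | insert _ _ h ih => rw [Finset.sum_insert h, Jmap_add, ih, Finset.sum_insert h]


lemma sum_split (f : Fin (2 * n) → ℝ) :
    ∑ i, f i = ∑ j : Fin n, f ⟨(j : ℕ), by omega⟩ + ∑ j : Fin n, f ⟨(j : ℕ) + n, by omega⟩ := by
  have h : n + n = 2 * n := (two_mul n).symm
  rw [← Equiv.sum_comp (finSumFinEquiv.trans (finCongr h)) f, Fintype.sum_sum_type]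
  congr 1
  all_goals
    apply Finset.sum_congr rfl; intro j _
    congr 1
    try (apply Fin.ext; simp; try omega)

lemma Jmap_lo (x : E2 n) (j : Fin n) (h : (j : ℕ) < 2 * n) :
    Jmap x ⟨(j : ℕ), h⟩ = -x ⟨(j : ℕ) + n, by omega⟩ := dif_pos j.isLt

lemma Jmap_hi (x : E2 n) (j : Fin n) (h : (j : ℕ) + n < 2 * n) :
    Jmap x ⟨(j : ℕ) + n, h⟩ = x ⟨(j : ℕ), by omega⟩ := by
  have h2 : ¬ ((j : ℕ) + n < n) := by omega
  show dite _ _ _ = _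
  rw [dif_neg h2]
  congr 1
  ext; simp

lemma omega0_antisymm (u v : E2 n) : omega0 u v = - omega0 v u := by
  simp only [omega0, ip]
  rw [sum_split (fun i => Jmap u i * v i), sum_split (fun i => Jmap v i * u i)]
  rw [← Finset.sum_add_distrib]
  have : ∀ j : Fin n, Jmap u ⟨(j:ℕ), by omega⟩ * v ⟨(j:ℕ), by omega⟩
      + Jmap u ⟨(j:ℕ)+n, by omega⟩ * v ⟨(j:ℕ)+n, by omega⟩
      = -(Jmap v ⟨(j:ℕ), by omega⟩ * u ⟨(j:ℕ), by omega⟩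
      + Jmap v ⟨(j:ℕ)+n, by omega⟩ * u ⟨(j:ℕ)+n, by omega⟩) := by
    intro j
    rw [Jmap_lo u j, Jmap_hi u j, Jmap_lo v j, Jmap_hi v j]
    ring
  rw [Finset.sum_congr rfl (fun j _ => this j)]
  rw [Finset.sum_neg_distrib, Finset.sum_add_distrib]

lemma omega0_self (u : E2 n) : omega0 u u = 0 := by
  have := omega0_antisymm u u; linarith

lemma ip_negJ (u v : E2 n) : ip (-(Jmap u)) v = omega0 v u := by
  rw [ip_neg_left, ← omega0, omega0_antisymm v u]

/-! ### Analytic lemmas -/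

def Fco (a b t : ℝ) : ℝ := max (min b t - a) 0

lemma Fco_continuous (a b : ℝ) : Continuous (fun t => Fco a b t) :=
  (((continuous_const.min continuous_id).sub continuous_const).max continuous_const)

lemma indicator_intervalIntegrable (a b c d : ℝ) (x : E2 n) :
    IntervalIntegrable ((Ioo a b).indicator (fun _ => x)) volume c d := by
  rw [intervalIntegrable_iff]
  apply (integrable_indicator_iff measurableSet_Ioo).2
  refine integrableOn_const ?_ (by simp)
  apply ne_of_lt
  calc (volume.restrict (Set.uIoc c d)) (Ioo a b) ≤ volume.restrict (Set.uIoc c d) Set.univ :=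
        measure_mono (Set.subset_univ _)
    _ = volume (Set.uIoc c d) := by rw [Measure.restrict_apply_univ]
    _ < ⊤ := by
        rw [Set.uIoc]
        exact measure_Ioc_lt_top

lemma integral_indicator_Ioo (a b t : ℝ) (ha : 0 ≤ a) (hab : a ≤ b) (ht : 0 ≤ t) (x : E2 n) :
    ∫ s in (0:ℝ)..t, (Ioo a b).indicator (fun _ => x) s = Fco a b t • x := by
  rw [intervalIntegral.integral_of_le ht]
  have h1 : ∫ s in Set.Ioc 0 t, (Ioo a b).indicator (fun _ => x) s
      = ∫ s in Set.Ioc 0 t, (Ioc a b).indicator (fun _ => x) s := by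
    apply integral_congr_ae
    have hae : ∀ᵐ (s : ℝ) ∂(volume.restrict (Set.Ioc 0 t)), s ≠ b := by
      apply ae_restrict_of_ae
      refine MeasureTheory.ae_iff.2 ?_
      simp only [ne_eq, not_not, Set.setOf_eq_eq_singleton]
      exact Real.volume_singleton
    filter_upwards [hae] with s hs
    by_cases hmem : s ∈ Ioo a b
    · rw [Set.indicator_of_mem hmem, Set.indicator_of_mem (Set.Ioo_subset_Ioc_self hmem)]
    · have : s ∉ Ioc a b := by
        intro hc
        exact hmem ⟨hc.1, lt_of_le_of_ne hc.2 hs⟩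
      rw [Set.indicator_of_notMem hmem, Set.indicator_of_notMem this]
  rw [h1, integral_indicator measurableSet_Ioc]
  rw [setIntegral_const, measureReal_def, Measure.restrict_apply measurableSet_Ioc, Set.Ioc_inter_Ioc,
    max_eq_left ha, Real.volume_Ioc, ENNReal.toReal_ofReal']
  rfl


section PartitionLemmas

variable {m : ℕ} {τ : Fin (m + 1) → ℝ} {w : Fin m → E2 n}

lemma step_intervalIntegrable (c d : ℝ) :
    IntervalIntegrable (stepFn m τ w) volume c d := by
  have h := IntervalIntegrable.sum (μ := volume) (a := c) (b := d) Finset.univ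
    (f := fun (i : Fin m) => ((Ioo (τ i.castSucc) (τ i.succ)).indicator (fun _ => w i)))
    (fun i _ => indicator_intervalIntegrable _ _ _ _ _)
  have e : stepFn m τ w = ∑ i : Fin m,
      ((Ioo (τ i.castSucc) (τ i.succ)).indicator (fun _ => w i)) := by
    funext t; simp [stepFn, Finset.sum_apply]
  rw [e]
  exact h

lemma tau_nonneg (hmono : Monotone τ) (h0 : τ 0 = 0) (i : Fin (m + 1)) : 0 ≤ τ i :=
  h0 ▸ hmono (Fin.zero_le i)

lemma tau_le_one (hmono : Monotone τ) (h1 : τ (Fin.last m) = 1) (i : Fin (m + 1)) : τ i ≤ 1 :=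
  h1 ▸ hmono (Fin.le_last i)

lemma ell_nonneg (hmono : Monotone τ) (i : Fin m) : 0 ≤ τ i.succ - τ i.castSucc :=
  sub_nonneg.2 (hmono (Fin.castSucc_le_succ i))

lemma Fformula (hmono : Monotone τ) (h0 : τ 0 = 0) (t : ℝ) (ht : 0 ≤ t) :
    ∫ s in (0:ℝ)..t, stepFn m τ w s
      = ∑ i : Fin m, Fco (τ i.castSucc) (τ i.succ) t • w i := by
  have : stepFn m τ w = fun t => ∑ i : Fin m,
      (Ioo (τ i.castSucc) (τ i.succ)).indicator (fun _ => w i) t := rfl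
  rw [this, intervalIntegral.integral_finset_sum
    (fun i _ => indicator_intervalIntegrable _ _ _ _ _)]
  exact Finset.sum_congr rfl fun i _ => integral_indicator_Ioo _ _ t
    (tau_nonneg hmono h0 _) (hmono (Fin.castSucc_le_succ i)) ht _

lemma Fco_at_one (hmono : Monotone τ) (h1 : τ (Fin.last m) = 1) (i : Fin m) :
    Fco (τ i.castSucc) (τ i.succ) 1 = τ i.succ - τ i.castSucc := by
  rw [Fco, min_eq_left (tau_le_one hmono h1 _), max_eq_left (ell_nonneg hmono i)]

lemma DISP (hmono : Monotone τ) (h0 : τ 0 = 0) (h1 : τ (Fin.last m) = 1) :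
    ∫ s in (0:ℝ)..1, stepFn m τ w s
      = ∑ i : Fin m, (τ i.succ - τ i.castSucc) • w i := by
  rw [Fformula hmono h0 1 zero_le_one]
  exact Finset.sum_congr rfl fun i _ => by rw [Fco_at_one hmono h1]

end PartitionLemmas

lemma indicator_const_smul' (s : Set ℝ) (t : ℝ) (x : E2 n) :
    s.indicator (fun _ => x) t = s.indicator (fun _ => (1:ℝ)) t • x := by
  by_cases h : t ∈ s <;> simp [h]

lemma indicator_one_mul (s : Set ℝ) (g : ℝ → ℝ) (t : ℝ) :
    s.indicator (fun _ => (1:ℝ)) t * g t = s.indicator g t := by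
  by_cases h : t ∈ s <;> simp [h]

lemma indicator_cont_intervalIntegrable {g : ℝ → ℝ} (hg : Continuous g) (a b c d : ℝ) :
    IntervalIntegrable ((Ioo a b).indicator g) volume c d := by
  rw [intervalIntegrable_iff]
  apply (integrable_indicator_iff measurableSet_Ioo).2
  exact (hg.integrableOn_uIoc (μ := volume) (a := c) (b := d)).integrableOn

lemma integral01_indicator_Ioo (g : ℝ → ℝ) (a b : ℝ) (ha : 0 ≤ a) (hab : a ≤ b) (hb : b ≤ 1) :
    ∫ t in (0:ℝ)..1, (Ioo a b).indicator g t = ∫ t in a..b, g t := by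
  rw [intervalIntegral.integral_of_le zero_le_one, intervalIntegral.integral_of_le hab,
    integral_indicator measurableSet_Ioo]
  have hsub : Ioo a b ⊆ Ioc (0:ℝ) 1 :=
    fun x hx => ⟨lt_of_le_of_lt ha hx.1, le_trans (le_of_lt hx.2) hb⟩
  rw [show (∫ t in Ioo a b, g t ∂(volume.restrict (Ioc 0 1)))
      = ∫ t, g t ∂((volume.restrict (Ioc 0 1)).restrict (Ioo a b)) from rfl]
  rw [Measure.restrict_restrict measurableSet_Ioo, Set.inter_eq_self_of_subset_left hsub,
    integral_Ioc_eq_integral_Ioo]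

section Master

variable {m : ℕ} {τ : Fin (m + 1) → ℝ} {w : Fin m → E2 n}

lemma MASTER (z0 : E2 n) (hmono : Monotone τ) (h0 : τ 0 = 0) (h1 : τ (Fin.last m) = 1) :
    ∫ t in (0:ℝ)..1,
        ip (-(Jmap (stepFn m τ w t))) (z0 + ∫ s in (0:ℝ)..t, stepFn m τ w s)
    = (∑ i : Fin m, (τ i.succ - τ i.castSucc) * ip (-(Jmap (w i))) z0)
      + ∑ i : Fin m, ∑ j : Fin m, (if (j:ℕ) < (i:ℕ) then
          (τ i.succ - τ i.castSucc) * (τ j.succ - τ j.castSucc) * ip (-(Jmap (w i))) (w j)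
        else 0) := by
  set Fc : Fin m → ℝ → ℝ := fun j t => Fco (τ j.castSucc) (τ j.succ) t with hFc
  set h : Fin m → ℝ → ℝ := fun i t =>
    ip (-(Jmap (w i))) z0 + ∑ j : Fin m, Fc j t * ip (-(Jmap (w i))) (w j) with hh
  have hcont : ∀ i, Continuous (h i) := fun i =>
    continuous_const.add (continuous_finset_sum _ fun j _ =>
      (Fco_continuous _ _).mul continuous_const)
  -- Step 1: pointwise identity on [0,1]
  have step1 : Set.EqOn
      (fun t => ip (-(Jmap (stepFn m τ w t))) (z0 + ∫ s in (0:ℝ)..t, stepFn m τ w s))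
      (fun t => ∑ i : Fin m, (Ioo (τ i.castSucc) (τ i.succ)).indicator (h i) t)
      (Set.uIcc 0 1) := by
    intro t ht
    rw [Set.uIcc_of_le zero_le_one] at ht
    have ht0 : (0:ℝ) ≤ t := ht.1
    simp only
    rw [Fformula hmono h0 t ht0]
    have e1 : stepFn m τ w t = ∑ i : Fin m,
        ((Ioo (τ i.castSucc) (τ i.succ)).indicator (fun _ => (1:ℝ)) t) • w i :=
      Finset.sum_congr rfl fun i _ => indicator_const_smul' _ _ _
    rw [e1, Jmap_sum, ← Finset.sum_neg_distrib, ip_sum_left]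
    have e2 : ∀ i : Fin m,
        ip (-(Jmap (((Ioo (τ i.castSucc) (τ i.succ)).indicator (fun _ => (1:ℝ)) t) • w i)))
          (z0 + ∑ j : Fin m, Fc j t • w j)
        = (Ioo (τ i.castSucc) (τ i.succ)).indicator (h i) t := by
      intro i
      rw [Jmap_smul, ← smul_neg, ip_smul_left, ip_add_right, ip_sum_right]
      have e3 : ∀ j : Fin m, ip (-(Jmap (w i))) (Fc j t • w j)
          = Fc j t * ip (-(Jmap (w i))) (w j) := fun j => ip_smul_right _ _ _
      rw [Finset.sum_congr rfl fun j _ => e3 j]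
      exact indicator_one_mul _ (h i) _
    exact Finset.sum_congr rfl fun i _ => e2 i
  rw [intervalIntegral.integral_congr step1]
  rw [intervalIntegral.integral_finset_sum
    (fun i _ => indicator_cont_intervalIntegrable (hcont i) _ _ _ _)]
  -- Step 2: each summand
  have step2 : ∀ i : Fin m,
      ∫ t in (0:ℝ)..1, (Ioo (τ i.castSucc) (τ i.succ)).indicator (h i) t
      = (τ i.succ - τ i.castSucc) * ip (-(Jmap (w i))) z0
        + ∑ j : Fin m, (if (j:ℕ) < (i:ℕ) then
            (τ i.succ - τ i.castSucc) * (τ j.succ - τ j.castSucc) * ip (-(Jmap (w i))) (w j)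
          else 0) := by
    intro i
    have hab : τ i.castSucc ≤ τ i.succ := hmono (Fin.castSucc_le_succ i)
    rw [integral01_indicator_Ioo _ _ _ (tau_nonneg hmono h0 _) hab (tau_le_one hmono h1 _)]
    rw [hh]
    rw [intervalIntegral.integral_add (f := fun t => ip (-(Jmap (w i))) z0)
      (g := fun t => ∑ j : Fin m, Fc j t * ip (-(Jmap (w i))) (w j)) (intervalIntegrable_const)
      ((continuous_finset_sum _ fun j _ =>
        (Fco_continuous _ _).mul continuous_const).intervalIntegrable _ _)]
    rw [intervalIntegral.integral_const, smul_eq_mul]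
    congr 1
    rw [intervalIntegral.integral_finset_sum (f := fun j t => Fc j t * ip (-(Jmap (w i))) (w j))
      (fun j _ => ((Fco_continuous _ _).mul continuous_const).intervalIntegrable _ _)]
    apply Finset.sum_congr rfl
    intro j _
    rw [intervalIntegral.integral_mul_const]
    rcases lt_trichotomy ((j:ℕ)) ((i:ℕ)) with hlt | heq | hgt
    · rw [if_pos hlt]
      have hsle : τ j.succ ≤ τ i.castSucc := by
        apply hmono
        rw [Fin.le_def, Fin.val_succ, Fin.coe_castSucc]
        omega
      have hconst : Set.EqOn (fun t => Fc j t)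
          (fun _ => τ j.succ - τ j.castSucc) (Set.uIcc (τ i.castSucc) (τ i.succ)) := by
        intro t ht
        rw [Set.uIcc_of_le hab] at ht
        simp only [hFc, Fco]
        rw [min_eq_left (le_trans hsle ht.1), max_eq_left (ell_nonneg hmono j)]
      rw [intervalIntegral.integral_congr hconst, intervalIntegral.integral_const, smul_eq_mul]
      try ring
    · rw [if_neg (by omega)]
      have : ip (-(Jmap (w i))) (w j) = 0 := by
        have : j = i := Fin.ext heq
        rw [this, ip_negJ, omega0_self]
      rw [this, mul_zero]
    · rw [if_neg (by omega)]
      have hsle : τ i.succ ≤ τ j.castSucc := by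
        apply hmono
        rw [Fin.le_def, Fin.val_succ, Fin.coe_castSucc]
        omega
      have hzero : Set.EqOn (fun t => Fc j t) (fun _ => (0:ℝ))
          (Set.uIcc (τ i.castSucc) (τ i.succ)) := by
        intro t ht
        rw [Set.uIcc_of_le hab] at ht
        simp only [hFc, Fco]
        have h1' : min (τ j.succ) t = t :=
          min_eq_right (le_trans ht.2 (le_trans hsle (hmono (Fin.castSucc_le_succ j))))
        rw [h1', max_eq_right (by
          have := le_trans ht.2 hsle
          linarith)]
      rw [intervalIntegral.integral_congr hzero, intervalIntegral.integral_zero, zero_mul]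
  rw [Finset.sum_congr rfl fun i _ => step2 i, Finset.sum_add_distrib]

end Master

/-! ### Combinatorics on lists of segments -/

section Lists

abbrev Seg (n : ℕ) := ℝ × E2 n

def Sw (u : E2 n) (t : List (Seg n)) : ℝ := (t.map (fun q => q.1 * omega0 u q.2)).sum

def QQ : List (Seg n) → ℝ
  | [] => 0
  | p :: t => p.1 * Sw p.2 t + QQ t

def crs (a b : List (Seg n)) : ℝ := (a.map (fun p => p.1 * Sw p.2 b)).sum

def tot (s : List (Seg n)) : ℝ := (s.map Prod.fst).sum

def disp (s : List (Seg n)) : E2 n := (s.map (fun q => q.1 • q.2)).sum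

@[simp] lemma Sw_nil (u : E2 n) : Sw u ([] : List (Seg n)) = 0 := rfl

@[simp] lemma Sw_cons (u : E2 n) (q : Seg n) (t : List (Seg n)) :
    Sw u (q :: t) = q.1 * omega0 u q.2 + Sw u t := by simp [Sw]

@[simp] lemma Sw_append (u : E2 n) (a b : List (Seg n)) :
    Sw u (a ++ b) = Sw u a + Sw u b := by simp [Sw]

@[simp] lemma QQ_nil : QQ ([] : List (Seg n)) = 0 := rfl

@[simp] lemma QQ_cons (p : Seg n) (t : List (Seg n)) :
    QQ (p :: t) = p.1 * Sw p.2 t + QQ t := rfl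

@[simp] lemma crs_nil (b : List (Seg n)) : crs ([] : List (Seg n)) b = 0 := by simp [crs]

@[simp] lemma crs_cons (p : Seg n) (a b : List (Seg n)) :
    crs (p :: a) b = p.1 * Sw p.2 b + crs a b := by simp [crs]

lemma QQ_append (a b : List (Seg n)) : QQ (a ++ b) = QQ a + QQ b + crs a b := by
  induction a with
  | nil => simp
  | cons p a ih => simp [ih]; ring

lemma crs_append_right (a b c : List (Seg n)) :
    crs a (b ++ c) = crs a b + crs a c := by
  induction a with
  | nil => simp
  | cons p a ih => simp [ih]; ring

lemma crs_nil_right (a : List (Seg n)) : crs a ([] : List (Seg n)) = 0 := by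
  induction a with
  | nil => simp
  | cons p a ih => simp [ih]

lemma crs_single_right (a : List (Seg n)) (q : Seg n) :
    crs a [q] = -(q.1 * Sw q.2 a) := by
  induction a with
  | nil => simp
  | cons p a ih =>
      simp [ih]
      rw [omega0_antisymm p.2 q.2]
      ring

@[simp] lemma tot_nil : tot ([] : List (Seg n)) = 0 := rfl
@[simp] lemma tot_cons (p : Seg n) (t : List (Seg n)) : tot (p :: t) = p.1 + tot t := by
  simp [tot]
@[simp] lemma tot_append (a b : List (Seg n)) : tot (a ++ b) = tot a + tot b := by simp [tot]

@[simp] lemma disp_nil : disp ([] : List (Seg n)) = 0 := rfl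
@[simp] lemma disp_cons (p : Seg n) (t : List (Seg n)) : disp (p :: t) = p.1 • p.2 + disp t := by
  simp [disp]
@[simp] lemma disp_append (a b : List (Seg n)) : disp (a ++ b) = disp a + disp b := by
  simp [disp]

lemma crs_append_left (a b c : List (Seg n)) : crs (a ++ b) c = crs a c + crs b c := by
  simp [crs]

lemma surgery1 (A B C : List (Seg n)) (lp lq : ℝ) (u : E2 n) :
    QQ (A ++ ((lp + lq, u) :: (B ++ C)))
      = QQ (A ++ ((lp, u) :: (B ++ ((lq, u) :: C)))) + 2 * lq * Sw u B := by
  have h1 : A ++ ((lp + lq, u) :: (B ++ C)) = A ++ ([((lp + lq, u) : Seg n)] ++ (B ++ C)) := rfl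
  have h2 : A ++ ((lp, u) :: (B ++ ((lq, u) :: C)))
      = A ++ ([((lp, u) : Seg n)] ++ (B ++ ([((lq, u) : Seg n)] ++ C))) := rfl
  rw [h1, h2]
  simp only [QQ_append, crs_append_right, Sw_append, QQ_cons, QQ_nil, Sw_nil, Sw_cons,
    crs_cons, crs_nil, crs_single_right, omega0_self]
  ring

lemma surgery2 (A B C : List (Seg n)) (lp lq : ℝ) (u : E2 n) :
    QQ ((A ++ B) ++ ((lp + lq, u) :: C))
      = QQ (A ++ ((lp, u) :: (B ++ ((lq, u) :: C)))) - 2 * lp * Sw u B := by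
  have h1 : (A ++ B) ++ ((lp + lq, u) :: C) = (A ++ B) ++ ([((lp + lq, u) : Seg n)] ++ C) := rfl
  have h2 : A ++ ((lp, u) :: (B ++ ((lq, u) :: C)))
      = A ++ ([((lp, u) : Seg n)] ++ (B ++ ([((lq, u) : Seg n)] ++ C))) := rfl
  rw [h1, h2]
  simp only [QQ_append, crs_append_right, crs_append_left, Sw_append, QQ_cons, QQ_nil, Sw_nil,
    Sw_cons, crs_cons, crs_nil, crs_single_right, omega0_self]
  ring

end Lists

section Merge

lemma exists_dup {α β : Type*} (f : α → β) :
    ∀ (l : List α), ¬ (l.map f).Nodup →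
    ∃ (A : List α) (p : α) (B : List α) (q : α) (C : List α),
      l = A ++ p :: (B ++ q :: C) ∧ f p = f q := by
  intro l
  induction l with
  | nil => intro h; exact absurd List.nodup_nil h
  | cons h t ih =>
      intro hnd
      rw [List.map_cons, List.nodup_cons] at hnd
      by_cases hmem : f h ∈ t.map f
      · obtain ⟨q, hq, hfq⟩ := List.mem_map.1 hmem
        obtain ⟨B, C, rfl⟩ := List.append_of_mem hq
        exact ⟨[], h, B, q, C, rfl, hfq.symm⟩
      · have : ¬ (t.map f).Nodup := fun hn => hnd ⟨hmem, hn⟩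
        obtain ⟨A, p, B, q, C, rfl, hf⟩ := ih this
        exact ⟨h :: A, p, B, q, C, rfl, hf⟩

lemma merge_exists (N : ℕ) :
    ∀ s : List (Seg n), s.length ≤ N → (∀ p ∈ s, 0 ≤ p.1) →
    ∃ s' : List (Seg n), (∀ p ∈ s', 0 ≤ p.1) ∧ (s'.map Prod.snd).Nodup ∧
      (∀ p ∈ s', ∃ q ∈ s, p.2 = q.2) ∧ tot s' = tot s ∧ disp s' = disp s ∧ QQ s ≤ QQ s' := by
  induction N with
  | zero =>
      intro s hlen hpos
      have : s = [] := List.length_eq_zero_iff.1 (Nat.le_zero.1 hlen)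
      subst this
      exact ⟨[], by simp, List.nodup_nil, by simp, rfl, rfl, le_refl _⟩
  | succ N ih =>
      intro s hlen hpos
      by_cases hnd : (s.map Prod.snd).Nodup
      · exact ⟨s, hpos, hnd, fun p hp => ⟨p, hp, rfl⟩, rfl, rfl, le_refl _⟩
      obtain ⟨A, p, B, q, C, hs, hpq⟩ := exists_dup Prod.snd s hnd
      obtain ⟨lp, u⟩ := p
      obtain ⟨lq, u'⟩ := q
      simp only at hpq
      subst hpq
      have hlp : 0 ≤ lp := by
        have : ((lp, u) : Seg n) ∈ s := by rw [hs]; simp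
        exact hpos _ this
      have hlq : 0 ≤ lq := by
        have : ((lq, u) : Seg n) ∈ s := by rw [hs]; simp
        exact hpos _ this
      -- choose direction
      rcases le_or_gt 0 (Sw u B) with hSw | hSw
      · -- move q-mass left: s₁ = A ++ (lp+lq, u) :: (B ++ C)
        set s₁ : List (Seg n) := A ++ ((lp + lq, u) :: (B ++ C)) with hs₁
        have hlen₁ : s₁.length ≤ N := by
          have : s.length = A.length + B.length + C.length + 2 := by rw [hs]; simp; omega
          have h2 : s₁.length = A.length + B.length + C.length + 1 := by rw [hs₁]; simp; omega
          omega
        have hpos₁ : ∀ r ∈ s₁, 0 ≤ r.1 := by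
          intro r hr
          rw [hs₁] at hr
          rcases List.mem_append.1 hr with h | h
          · exact hpos r (by rw [hs]; exact List.mem_append_left _ h)
          · rcases List.mem_cons.1 h with h | h
            · rw [h]; positivity
            · apply hpos
              rw [hs]
              rcases List.mem_append.1 h with h | h
              · exact List.mem_append_right _ (List.mem_cons_of_mem _ (List.mem_append_left _ h))
              · exact List.mem_append_right _ (List.mem_cons_of_mem _
                  (List.mem_append_right _ (List.mem_cons_of_mem _ h)))
        have hQ : QQ s ≤ QQ s₁ := by
          rw [hs, hs₁, surgery1]
          nlinarith
        have htot : tot s₁ = tot s := by rw [hs, hs₁]; simp; ring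
        have hdisp : disp s₁ = disp s := by
          rw [hs, hs₁]; simp [add_smul]; abel
        have hvec : ∀ r ∈ s₁, ∃ r' ∈ s, r.2 = r'.2 := by
          intro r hr
          rw [hs₁] at hr
          rcases List.mem_append.1 hr with h | h
          · exact ⟨r, by rw [hs]; exact List.mem_append_left _ h, rfl⟩
          · rcases List.mem_cons.1 h with h | h
            · refine ⟨(lp, u), by rw [hs]; simp, ?_⟩
              rw [h]
            · refine ⟨r, ?_, rfl⟩
              rw [hs]
              rcases List.mem_append.1 h with h | h
              · exact List.mem_append_right _ (List.mem_cons_of_mem _ (List.mem_append_left _ h))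
              · exact List.mem_append_right _ (List.mem_cons_of_mem _
                  (List.mem_append_right _ (List.mem_cons_of_mem _ h)))
        obtain ⟨s', hp', hnd', hvec', htot', hdisp', hQ'⟩ := ih s₁ hlen₁ hpos₁
        refine ⟨s', hp', hnd', ?_, htot'.trans htot, hdisp'.trans hdisp, hQ.trans hQ'⟩
        intro r hr
        obtain ⟨r₁, hr₁, he⟩ := hvec' r hr
        obtain ⟨r₂, hr₂, he₂⟩ := hvec r₁ hr₁
        exact ⟨r₂, hr₂, he.trans he₂⟩
      · -- move p-mass right: s₂ = (A ++ B) ++ (lp+lq, u) :: C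
        set s₂ : List (Seg n) := (A ++ B) ++ ((lp + lq, u) :: C) with hs₂
        have hlen₂ : s₂.length ≤ N := by
          have : s.length = A.length + B.length + C.length + 2 := by rw [hs]; simp; omega
          have h2 : s₂.length = A.length + B.length + C.length + 1 := by rw [hs₂]; simp; omega
          omega
        have hpos₂ : ∀ r ∈ s₂, 0 ≤ r.1 := by
          intro r hr
          rw [hs₂] at hr
          rcases List.mem_append.1 hr with h | h
          · rcases List.mem_append.1 h with h | h
            · exact hpos r (by rw [hs]; exact List.mem_append_left _ h)
            · exact hpos r (by
                rw [hs]
                exact List.mem_append_right _ (List.mem_cons_of_mem _ (List.mem_append_left _ h)))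
          · rcases List.mem_cons.1 h with h | h
            · rw [h]; positivity
            · exact hpos r (by
                rw [hs]
                exact List.mem_append_right _ (List.mem_cons_of_mem _
                  (List.mem_append_right _ (List.mem_cons_of_mem _ h))))
        have hQ : QQ s ≤ QQ s₂ := by
          rw [hs, hs₂, surgery2]
          nlinarith
        have htot : tot s₂ = tot s := by rw [hs, hs₂]; simp; ring
        have hdisp : disp s₂ = disp s := by
          rw [hs, hs₂]; simp [add_smul]; abel
        have hvec : ∀ r ∈ s₂, ∃ r' ∈ s, r.2 = r'.2 := by
          intro r hr
          rw [hs₂] at hr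
          rcases List.mem_append.1 hr with h | h
          · rcases List.mem_append.1 h with h | h
            · exact ⟨r, by rw [hs]; exact List.mem_append_left _ h, rfl⟩
            · refine ⟨r, ?_, rfl⟩
              rw [hs]
              exact List.mem_append_right _ (List.mem_cons_of_mem _ (List.mem_append_left _ h))
          · rcases List.mem_cons.1 h with h | h
            · refine ⟨(lp, u), by rw [hs]; simp, ?_⟩
              rw [h]
            · refine ⟨r, ?_, rfl⟩
              rw [hs]
              exact List.mem_append_right _ (List.mem_cons_of_mem _
                (List.mem_append_right _ (List.mem_cons_of_mem _ h)))
        obtain ⟨s', hp', hnd', hvec', htot', hdisp', hQ'⟩ := ih s₂ hlen₂ hpos₂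
        refine ⟨s', hp', hnd', ?_, htot'.trans htot, hdisp'.trans hdisp, hQ.trans hQ'⟩
        intro r hr
        obtain ⟨r₁, hr₁, he⟩ := hvec' r hr
        obtain ⟨r₂, hr₂, he₂⟩ := hvec r₁ hr₁
        exact ⟨r₂, hr₂, he.trans he₂⟩

end Merge

section Bridge

def tauOf (s : List (Seg n)) : Fin (s.length + 1) → ℝ :=
  fun i => ((s.take i).map Prod.fst).sum

def wOf (s : List (Seg n)) : Fin s.length → E2 n := fun i => (s.get i).2

lemma tauOf_zero (s : List (Seg n)) : tauOf s 0 = 0 := by simp [tauOf]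

lemma tauOf_last (s : List (Seg n)) : tauOf s (Fin.last s.length) = tot s := by
  simp [tauOf, tot, List.take_of_length_le (le_refl s.length)]

lemma takeSum_succ (s : List (Seg n)) (i : ℕ) (hi : i < s.length) :
    ((s.take (i+1)).map Prod.fst).sum = ((s.take i).map Prod.fst).sum + (s.get ⟨i, hi⟩).1 := by
  rw [List.map_take, List.map_take, List.sum_take_succ _ i (by simpa using hi)]
  simp

lemma takeSum_mono (s : List (Seg n)) (hpos : ∀ p ∈ s, 0 ≤ p.1) :
    Monotone (fun k => ((s.take k).map Prod.fst).sum) := by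
  apply monotone_nat_of_le_succ
  intro k
  by_cases hk : k < s.length
  · rw [takeSum_succ s k hk]
    have : 0 ≤ (s.get ⟨k, hk⟩).1 := hpos _ (List.get_mem s ⟨k, hk⟩)
    linarith
  · rw [List.take_of_length_le (by omega), List.take_of_length_le (by omega)]

lemma tauOf_mono (s : List (Seg n)) (hpos : ∀ p ∈ s, 0 ≤ p.1) : Monotone (tauOf s) :=
  fun i j hij => takeSum_mono s hpos hij

lemma tauOf_ell (s : List (Seg n)) (i : Fin s.length) :
    tauOf s i.succ - tauOf s i.castSucc = (s.get i).1 := by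
  simp only [tauOf, Fin.val_succ, Fin.coe_castSucc]
  rw [takeSum_succ s i i.isLt]
  ring

lemma list_sum_get {M : Type*} [AddCommMonoid M] (s : List (Seg n)) (f : Seg n → M) :
    (s.map f).sum = ∑ i : Fin s.length, f (s.get i) := by
  conv_lhs => rw [← List.ofFn_get s]
  rw [List.map_ofFn, List.sum_ofFn]
  rfl

def QQg (g : Seg n → Seg n → ℝ) : List (Seg n) → ℝ
  | [] => 0
  | p :: t => (t.map (g p)).sum + QQg g t

lemma ddsum_fin (g : Seg n → Seg n → ℝ) :
    ∀ (L : ℕ) (f : Fin L → Seg n),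
      (∑ i : Fin L, ∑ j : Fin L, (if (j:ℕ) < (i:ℕ) then g (f j) (f i) else 0))
        = QQg g (List.ofFn f) := by
  intro L
  induction L with
  | zero => intro f; simp [QQg]
  | succ L ih =>
      intro f
      rw [List.ofFn_succ]
      rw [show QQg g (f 0 :: List.ofFn (fun i => f i.succ))
        = ((List.ofFn (fun i : Fin L => f i.succ)).map (g (f 0))).sum
          + QQg g (List.ofFn (fun i => f i.succ)) from rfl]
      rw [← ih (fun i => f i.succ), List.map_ofFn, List.sum_ofFn]
      rw [Fin.sum_univ_succ]
      have h0 : (∑ j : Fin (L+1),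
          (if (j:ℕ) < ((0 : Fin (L+1)):ℕ) then g (f j) (f 0) else 0)) = 0 := by
        apply Finset.sum_eq_zero; intro j _; simp
      rw [h0, zero_add]
      have h1 : ∀ i : Fin L,
          (∑ j : Fin (L+1), (if (j:ℕ) < ((i.succ : Fin (L+1)):ℕ) then g (f j) (f i.succ) else 0))
          = g (f 0) (f i.succ)
            + ∑ j : Fin L, (if (j:ℕ) < (i:ℕ) then g ((fun k : Fin L => f k.succ) j) (f i.succ) else 0) := by
        intro i
        rw [Fin.sum_univ_succ]
        congr 1
        · simp
      rw [Finset.sum_congr rfl fun i _ => h1 i, Finset.sum_add_distrib]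
      simp [Function.comp]

lemma ddsum (g : Seg n → Seg n → ℝ) (s : List (Seg n)) :
    (∑ i : Fin s.length, ∑ j : Fin s.length,
      (if (j:ℕ) < (i:ℕ) then g (s.get j) (s.get i) else 0)) = QQg g s := by
  rw [ddsum_fin g s.length s.get, List.ofFn_get]

lemma QQg_eq_QQ (s : List (Seg n)) :
    QQg (fun p q => p.1 * q.1 * omega0 p.2 q.2) s = QQ s := by
  induction s with
  | nil => rfl
  | cons p t ih =>
      rw [show QQg _ (p :: t) = (t.map _).sum + QQg _ t from rfl, ih, QQ_cons]
      congr 1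
      rw [Sw, ← List.sum_map_mul_left]
      congr 1
      apply List.map_congr_left
      intro q _
      ring

end Bridge

lemma lin_combo {M : ℕ} (ℓ : Fin M → ℝ) (u : Fin M → E2 n) (y : E2 n) :
    ∑ i, ℓ i * ip (-(Jmap (u i))) y = ip (-(Jmap (∑ i, ℓ i • u i))) y := by
  rw [Jmap_sum, ← Finset.sum_neg_distrib, ip_sum_left]
  apply Finset.sum_congr rfl; intro i _
  rw [Jmap_smul, ← smul_neg, ip_smul_left]

lemma telescope {m : ℕ} (τ : Fin (m+1) → ℝ) :
    ∑ i : Fin m, (τ i.succ - τ i.castSucc) = τ (Fin.last m) - τ 0 := by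
  set ν : ℕ → ℝ := fun j => τ ⟨min j m, by omega⟩ with hν
  have h1 : ∀ i : Fin m, τ i.succ = ν ((i:ℕ)+1) := by
    intro i
    apply congr_arg τ
    apply Fin.ext
    simp [hν, Fin.val_succ]
    try omega
  have h2 : ∀ i : Fin m, τ i.castSucc = ν (i:ℕ) := by
    intro i
    apply congr_arg τ
    apply Fin.ext
    simp [hν]
    try omega
  have h3 : τ (Fin.last m) = ν m := by
    apply congr_arg τ; apply Fin.ext; simp [hν]
  have h4 : τ 0 = ν 0 := by
    apply congr_arg τ; apply Fin.ext; simp [hν]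
  calc ∑ i : Fin m, (τ i.succ - τ i.castSucc)
      = ∑ i : Fin m, (ν ((i:ℕ)+1) - ν (i:ℕ)) :=
        Finset.sum_congr rfl fun i _ => by rw [h1, h2]
    _ = ∑ j ∈ Finset.range m, (ν (j+1) - ν j) :=
        Fin.sum_univ_eq_sum_range (fun j => ν (j+1) - ν j) m
    _ = ν m - ν 0 := Finset.sum_range_sub ν m
    _ = τ (Fin.last m) - τ 0 := by rw [h3, h4]

lemma Jmap_zero : Jmap (0 : E2 n) = 0 := by
  funext i
  by_cases h : (i : ℕ) < n
  · show dite _ _ _ = _; rw [dif_pos h]; simp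
  · show dite _ _ _ = _; rw [dif_neg h]; simp

lemma listlin (s : List (Seg n)) (y : E2 n) :
    (s.map (fun q => q.1 * ip (-(Jmap q.2)) y)).sum = ip (-(Jmap (disp s))) y := by
  induction s with
  | nil => simp [disp, Jmap_zero, ip_neg_left, ip]
  | cons p t ih =>
      rw [List.map_cons, List.sum_cons, ih, disp_cons, Jmap_add, neg_add, ip_add_left,
        Jmap_smul, ← smul_neg, ip_smul_left]

/-- Lemma 3.4: given pairwise distinct vectors `v₁,…,v_k`, a piecewise
affine path `z` with velocities among `{v₁,…,v_k}` can be replaced by a piecewise affine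
path `z'` with the same endpoints, velocities a.e. in `{v₁,…,v_k}`, such that for each `j`
the (a.e. defined) set `{t : ż'(t) = v_j}` is connected — i.e. at most one nonempty
interval of the new partition carries the value `v_j` — and with no smaller value of
`∫₀¹ ⟨-Jż', z'⟩ dt`. -/
theorem piecewise_affine_merge_intervals
    (n k : ℕ) (v : Fin k → E2 n) (hv : Function.Injective v)
    (m : ℕ) (τ : Fin (m + 1) → ℝ) (hτ : IsPartition m τ) (w : Fin m → E2 n)
    (hw : ∀ i, w i ∈ Set.range v)
    (z : ℝ → E2 n)
    (hz : ∀ t ∈ Set.Icc (0:ℝ) 1, z t = z 0 + ∫ s in (0:ℝ)..t, stepFn m τ w s) :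
    ∃ (m' : ℕ) (τ' : Fin (m' + 1) → ℝ) (w' : Fin m' → E2 n),
      IsPartition m' τ' ∧
      (∀ i, w' i ∈ Set.range v) ∧
      z 0 + (∫ s in (0:ℝ)..1, stepFn m' τ' w' s) = z 1 ∧
      (∀ j : Fin k,
        {i : Fin m' | τ' i.castSucc < τ' i.succ ∧ w' i = v j}.Subsingleton) ∧
      ∫ t in (0:ℝ)..1,
          ip (-(Jmap (stepFn m' τ' w' t))) (z 0 + ∫ s in (0:ℝ)..t, stepFn m' τ' w' s)
        ≥ ∫ t in (0:ℝ)..1, ip (-(Jmap (stepFn m τ w t))) (z t) := by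
  obtain ⟨hmono, h0, h1⟩ := hτ
  set f : Fin m → Seg n := fun i => (τ i.succ - τ i.castSucc, w i) with hf
  set s₀ : List (Seg n) := List.ofFn f with hs₀
  have hpos₀ : ∀ p ∈ s₀, 0 ≤ p.1 := by
    intro p hp
    rw [hs₀, List.mem_ofFn] at hp
    obtain ⟨i, hi⟩ := hp
    rw [← hi]
    exact ell_nonneg hmono i
  obtain ⟨s', hp', hnd', hvec', htot', hdisp', hQ'⟩ :=
    merge_exists s₀.length s₀ (le_refl _) hpos₀
  have htot₀ : tot s₀ = 1 := by
    rw [tot, hs₀, List.map_ofFn, List.sum_ofFn]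
    have : ∀ i : Fin m, (Prod.fst ∘ f) i = τ i.succ - τ i.castSucc := fun i => rfl
    rw [Finset.sum_congr rfl fun i _ => this i, telescope τ, h1, h0]
    ring
  have hdisp₀ : disp s₀ = ∑ i : Fin m, (τ i.succ - τ i.castSucc) • w i := by
    rw [disp, hs₀, List.map_ofFn, List.sum_ofFn]
    rfl
  have hlast' : tauOf s' (Fin.last s'.length) = 1 := by
    rw [tauOf_last, htot', htot₀]
  have hmono' := tauOf_mono s' hp'
  have h0' := tauOf_zero s'
  refine ⟨s'.length, tauOf s', wOf s',
    ⟨hmono', h0', hlast'⟩, ?_, ?_, ?_, ?_⟩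
  · -- velocities in range v
    intro i
    obtain ⟨q, hq, he⟩ := hvec' (s'.get i) (List.get_mem s' i)
    rw [hs₀, List.mem_ofFn] at hq
    obtain ⟨j, hj⟩ := hq
    have : wOf s' i = w j := by
      rw [wOf, he, ← hj]
    rw [this]
    exact hw j
  · -- endpoint
    have hD' : ∫ s in (0:ℝ)..1, stepFn s'.length (tauOf s') (wOf s') s = disp s' := by
      rw [DISP hmono' h0' hlast']
      have : ∀ i : Fin s'.length,
          (tauOf s' i.succ - tauOf s' i.castSucc) • wOf s' i
            = (s'.get i).1 • (s'.get i).2 := by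
        intro i
        rw [tauOf_ell]
        rfl
      rw [Finset.sum_congr rfl fun i _ => this i, ← list_sum_get s' (fun q => q.1 • q.2)]
      rfl
    have hD : ∫ s in (0:ℝ)..1, stepFn m τ w s
        = ∑ i : Fin m, (τ i.succ - τ i.castSucc) • w i := DISP hmono h0 h1
    rw [hD', hdisp', hdisp₀, ← hD]
    exact (hz 1 ⟨zero_le_one, le_refl 1⟩).symm
  · -- subsingleton condition
    intro j i₁ hi₁ i₂ hi₂
    simp only [Set.mem_setOf_eq] at hi₁ hi₂
    have he : (s'.get i₁).2 = (s'.get i₂).2 := by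
      have e1 : (s'.get i₁).2 = v j := hi₁.2
      have e2 : (s'.get i₂).2 = v j := hi₂.2
      rw [e1, e2]
    have hlen₁ : (i₁ : ℕ) < (s'.map Prod.snd).length := by simpa using i₁.isLt
    have hlen₂ : (i₂ : ℕ) < (s'.map Prod.snd).length := by simpa using i₂.isLt
    have hg : (s'.map Prod.snd)[(i₁ : ℕ)]'hlen₁ = (s'.map Prod.snd)[(i₂ : ℕ)]'hlen₂ := by
      rw [List.getElem_map, List.getElem_map]
      simpa [List.get_eq_getElem] using he
    have := (hnd'.getElem_inj_iff).1 hg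
    exact Fin.ext this
  · -- the inequality
    have hcongr : Set.EqOn (fun t => ip (-(Jmap (stepFn m τ w t))) (z t))
        (fun t => ip (-(Jmap (stepFn m τ w t))) (z 0 + ∫ s in (0:ℝ)..t, stepFn m τ w s))
        (Set.uIcc 0 1) := by
      intro t ht
      rw [Set.uIcc_of_le zero_le_one] at ht
      simp only
      rw [hz t ht]
    rw [intervalIntegral.integral_congr hcongr]
    rw [MASTER (z 0) hmono h0 h1, MASTER (z 0) hmono' h0' hlast']
    set g : Seg n → Seg n → ℝ := fun p q => p.1 * q.1 * omega0 p.2 q.2 with hg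
    -- linear parts
    have hlin_old : ∑ i : Fin m, (τ i.succ - τ i.castSucc) * ip (-(Jmap (w i))) (z 0)
        = ip (-(Jmap (disp s₀))) (z 0) := by
      rw [hdisp₀, ← lin_combo]
    have hlin_new : ∑ i : Fin s'.length,
          (tauOf s' i.succ - tauOf s' i.castSucc) * ip (-(Jmap (wOf s' i))) (z 0)
        = ip (-(Jmap (disp s'))) (z 0) := by
      have : ∀ i : Fin s'.length,
          (tauOf s' i.succ - tauOf s' i.castSucc) * ip (-(Jmap (wOf s' i))) (z 0)
            = (s'.get i).1 * ip (-(Jmap ((s'.get i).2))) (z 0) := by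
        intro i; rw [tauOf_ell]; rfl
      rw [Finset.sum_congr rfl fun i _ => this i,
        ← list_sum_get s' (fun q => q.1 * ip (-(Jmap q.2)) (z 0)), listlin]
    -- quadratic parts
    have hquad_old : (∑ i : Fin m, ∑ j : Fin m, (if (j:ℕ) < (i:ℕ) then
          (τ i.succ - τ i.castSucc) * (τ j.succ - τ j.castSucc) * ip (-(Jmap (w i))) (w j)
        else 0)) = QQ s₀ := by
      have hterm : ∀ i j : Fin m,
          (if (j:ℕ) < (i:ℕ) then
            (τ i.succ - τ i.castSucc) * (τ j.succ - τ j.castSucc) * ip (-(Jmap (w i))) (w j)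
          else 0) = (if (j:ℕ) < (i:ℕ) then g (f j) (f i) else 0) := by
        intro i j
        by_cases hc : (j:ℕ) < (i:ℕ)
        · rw [if_pos hc, if_pos hc, hg, hf]
          simp only
          rw [ip_negJ]
          ring
        · rw [if_neg hc, if_neg hc]
      rw [Finset.sum_congr rfl fun i _ => Finset.sum_congr rfl fun j _ => hterm i j,
        ddsum_fin g m f, ← hs₀, hg, QQg_eq_QQ]
    have hquad_new : (∑ i : Fin s'.length, ∑ j : Fin s'.length, (if (j:ℕ) < (i:ℕ) then
          (tauOf s' i.succ - tauOf s' i.castSucc) * (tauOf s' j.succ - tauOf s' j.castSucc)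
            * ip (-(Jmap (wOf s' i))) (wOf s' j)
        else 0)) = QQ s' := by
      have hterm : ∀ i j : Fin s'.length,
          (if (j:ℕ) < (i:ℕ) then
            (tauOf s' i.succ - tauOf s' i.castSucc) * (tauOf s' j.succ - tauOf s' j.castSucc)
              * ip (-(Jmap (wOf s' i))) (wOf s' j)
          else 0) = (if (j:ℕ) < (i:ℕ) then g (s'.get j) (s'.get i) else 0) := by
        intro i j
        by_cases hc : (j:ℕ) < (i:ℕ)
        · rw [if_pos hc, if_pos hc, hg, tauOf_ell, tauOf_ell]
          simp only
          rw [show wOf s' i = (s'.get i).2 from rfl, show wOf s' j = (s'.get j).2 from rfl,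
            ip_negJ]
          ring
        · rw [if_neg hc, if_neg hc]
      rw [Finset.sum_congr rfl fun i _ => Finset.sum_congr rfl fun j _ => hterm i j,
        ddsum g s', hg, QQg_eq_QQ]
    rw [hlin_old, hlin_new, hquad_old, hquad_new, hdisp']
    exact add_le_add (le_refl _) hQ'
end
end
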